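/- arXiv:2201.06522 — 6 statements merged into one kernel-verified Lean document; each statement's English description precedes it below -/
import Mathlib

section
/- If (i,j) lies in the Rothe diagram D(w) of a permutation w, then there exists (a,b) in the essential set E(w) with a ≥ i, b ≥ j, lying in the same connected component of D(w) as (i,j), and with r_{a,b}(w) = r_{i,j}(w). -/
/-- Rank function of a permutation: `rk w i j = #{a : 1 ≤ a ≤ i, w a ≤ j}`. -/
def rk (w : Equiv.Perm ℕ) (i j : ℕ) : ℕ :=
  ((Finset.Icc 1 i).filter (fun a => w a ≤ j)).card

/-- `(i,j)` is in the Rothe diagram `D(w)`. -/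
def inRothe (w : Equiv.Perm ℕ) (i j : ℕ) : Prop :=
  j < w i ∧ i < w.symm j

instance (w : Equiv.Perm ℕ) (i j : ℕ) : Decidable (inRothe w i j) := by
  unfold inRothe; infer_instance

/-- `(i,j)` is in Fulton's essential set `E(w)`. -/
def inEss (w : Equiv.Perm ℕ) (i j : ℕ) : Prop :=
  inRothe w i j ∧ ¬ inRothe w (i+1) j ∧ ¬ inRothe w i (j+1)

/-- The minor with row set `I` and column set `J` belongs to `(i,j) ∈ E(w)`. -/
def belongsTo (w : Equiv.Perm ℕ) (I J : Finset ℕ) (i j : ℕ) : Prop :=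
  inEss w i j ∧ I ⊆ Finset.Icc 1 i ∧ J ⊆ Finset.Icc 1 j ∧
    I.card = rk w i j + 1 ∧ J.card = rk w i j + 1

/-- The minor `m_{I,J}` attends `M^{[i',j']}`. -/
def attends (w : Equiv.Perm ℕ) (I J : Finset ℕ) (i' j' : ℕ) : Prop :=
  (rk w i' j' < (I ∩ Finset.Icc 1 i').card ∧ (J ∩ Finset.Icc 1 j').card = J.card) ∨
  ((I ∩ Finset.Icc 1 i').card = I.card ∧ rk w i' j' < (J ∩ Finset.Icc 1 j').card)

/-- The minor `m_{I,J}` belonging to `(i,j) ∈ E(w)` is elusive. -/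
def elusive (w : Equiv.Perm ℕ) (I J : Finset ℕ) (i j : ℕ) : Prop :=
  belongsTo w I J i j ∧
    ∀ i' j', inEss w i' j' → rk w i' j' < rk w i j → ¬ attends w I J i' j'

/-- One step between edge-adjacent boxes of the Rothe diagram. -/
def adjStep (w : Equiv.Perm ℕ) (p q : ℕ × ℕ) : Prop :=
  inRothe w q.1 q.2 ∧
    ((p.1 = q.1 ∧ (p.2 + 1 = q.2 ∨ q.2 + 1 = p.2)) ∨
     (p.2 = q.2 ∧ (p.1 + 1 = q.1 ∨ q.1 + 1 = p.1)))

/-- p and q are in the same connected component of D(w). -/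
def sameComponent (w : Equiv.Perm ℕ) (p q : ℕ × ℕ) : Prop :=
  Relation.ReflTransGen (adjStep w) p q

lemma mem_of_perm_mem (n : ℕ) (w : Equiv.Perm ℕ)
    (hw : ∀ a, a ∉ Finset.Icc 1 n → w a = a) {a : ℕ} (ha : a ∈ Finset.Icc 1 n) :
    w a ∈ Finset.Icc 1 n := by
  by_contra hc
  have := hw _ hc
  have : w a = a := w.injective this
  rw [this] at hc; exact hc ha

lemma rothe_bound (n : ℕ) (w : Equiv.Perm ℕ)
    (hw : ∀ a, a ∉ Finset.Icc 1 n → w a = a) {i j : ℕ} (h : inRothe w i j) :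
    i < n ∧ j < n := by
  obtain ⟨h1, h2⟩ := h
  have hi1 : 1 ≤ i := by
    rcases Nat.eq_zero_or_pos i with rfl | hp
    · have : w 0 = 0 := hw 0 (by simp)
      omega
    · exact hp
  have hj1 : 1 ≤ j := by
    rcases Nat.eq_zero_or_pos j with rfl | hp
    · have h0 : w 0 = 0 := hw 0 (by simp)
      have : w.symm 0 = 0 := by
        rw [Equiv.symm_apply_eq]; exact h0.symm
      omega
    · exact hp
  have hsj : w.symm j ∈ Finset.Icc 1 n := by
    by_contra hc
    have hfix : w (w.symm j) = w.symm j := hw _ hc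
    rw [Equiv.apply_symm_apply] at hfix
    rw [← hfix] at hc
    simp only [Finset.mem_Icc, not_and, not_le] at hc
    have hjn : n < j := hc hj1
    -- then i < w.symm j = j, and j < w i
    have hiIcc : i ∈ Finset.Icc 1 n := by
      by_contra hic
      have : w i = i := hw _ hic
      omega
    have := mem_of_perm_mem n w hw hiIcc
    simp only [Finset.mem_Icc] at this
    omega
  simp only [Finset.mem_Icc] at hsj
  have hiIcc : i ∈ Finset.Icc 1 n := Finset.mem_Icc.mpr ⟨hi1, by omega⟩
  have hwi := mem_of_perm_mem n w hw hiIcc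
  simp only [Finset.mem_Icc] at hwi
  omega

lemma rk_right (w : Equiv.Perm ℕ) {i j : ℕ} (h : inRothe w i (j+1)) :
    rk w i (j+1) = rk w i j := by
  unfold rk
  apply congrArg
  apply Finset.filter_congr
  intro a ha
  simp only [Finset.mem_Icc] at ha
  constructor
  · intro hle
    rcases Nat.lt_or_ge (w a) (j+1) with h' | h'
    · omega
    · have : w a = j + 1 := by omega
      have : a = w.symm (j+1) := by rw [← this, Equiv.symm_apply_apply]
      have := h.2
      omega
  · omega

lemma rk_down (w : Equiv.Perm ℕ) {i j : ℕ} (h : inRothe w (i+1) j) :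
    rk w (i+1) j = rk w i j := by
  unfold rk
  have : Finset.Icc 1 (i+1) = insert (i+1) (Finset.Icc 1 i) := by
    ext a; simp [Finset.mem_Icc]; omega
  rw [this, Finset.filter_insert]
  have : ¬ w (i+1) ≤ j := by have := h.1; omega
  rw [if_neg this]

lemma aux_main (n : ℕ) (w : Equiv.Perm ℕ)
    (hw : ∀ a, a ∉ Finset.Icc 1 n → w a = a) :
    ∀ k i j, 2*n - i - j ≤ k → inRothe w i j →
    ∃ a b : ℕ, inEss w a b ∧ i ≤ a ∧ j ≤ b ∧
      sameComponent w (i, j) (a, b) ∧ rk w a b = rk w i j := by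
  intro k
  induction k with
  | zero =>
    intro i j hk h
    obtain ⟨hi, hj⟩ := rothe_bound n w hw h
    omega
  | succ k ih =>
    intro i j hk h
    obtain ⟨hi, hj⟩ := rothe_bound n w hw h
    by_cases h1 : inRothe w i (j+1)
    · obtain ⟨a, b, he, ha, hb, hc, hr⟩ := ih i (j+1) (by omega) h1
      refine ⟨a, b, he, ha, by omega, ?_, hr.trans (rk_right w h1)⟩
      exact Relation.ReflTransGen.head (show adjStep w (i,j) (i,j+1) from ⟨h1, Or.inl ⟨rfl, Or.inl rfl⟩⟩) hc
    by_cases h2 : inRothe w (i+1) j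
    · obtain ⟨a, b, he, ha, hb, hc, hr⟩ := ih (i+1) j (by omega) h2
      refine ⟨a, b, he, by omega, hb, ?_, hr.trans (rk_down w h2)⟩
      exact Relation.ReflTransGen.head (show adjStep w (i,j) (i+1,j) from ⟨h2, Or.inr ⟨rfl, Or.inl rfl⟩⟩) hc
    · exact ⟨i, j, ⟨h, h2, h1⟩, le_refl _, le_refl _, Relation.ReflTransGen.refl, rfl⟩

/-- every box of D(w) has an essential box weakly southeast of it,
in the same component, with the same rank value. -/
theorem exists_essential_southeast (n : ℕ) (w : Equiv.Perm ℕ)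
    (hw : ∀ a, a ∉ Finset.Icc 1 n → w a = a) (i j : ℕ) (h : inRothe w i j) :
    ∃ a b : ℕ, inEss w a b ∧ i ≤ a ∧ j ≤ b ∧
      sameComponent w (i, j) (a, b) ∧ rk w a b = rk w i j :=
  aux_main n w hw (2*n - i - j) i j le_rfl h
end

section
/- Let w ∈ S_n, let (i,j) ∈ E(w) with r = r_{i,j}(w), and suppose the minor m_{I,J} with I = {i_1 < ... < i_{r+1}} ⊆ [i], J = {j_1 < ... < j_{r+1}} ⊆ [j] is elusive. Then for every 1 ≤ k ≤ r, one has r_{i_k,j}(w) ≥ k and r_{i,j_k}(w) ≥ k. -/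
lemma rk_succ_row (w : Equiv.Perm ℕ) (p q : ℕ) :
    rk w (p+1) q = rk w p q + (if w (p+1) ≤ q then 1 else 0) := by
  unfold rk
  rw [show Finset.Icc 1 (p+1) = insert (p+1) (Finset.Icc 1 p) from
    (Finset.insert_Icc_right_eq_Icc_add_one (by omega)).symm]
  rw [Finset.filter_insert]
  split
  · rw [Finset.card_insert_of_notMem (by simp)]
  · simp

lemma rk_succ_col (w : Equiv.Perm ℕ) (p q : ℕ) :
    rk w p (q+1) = rk w p q + (if w.symm (q+1) ∈ Finset.Icc 1 p then 1 else 0) := by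
  unfold rk
  have key : ∀ a : ℕ, w a ≤ q + 1 ↔ (w a ≤ q ∨ a = w.symm (q+1)) := by
    intro a
    rw [Equiv.eq_symm_apply]
    omega
  rw [Finset.filter_congr (fun a _ => key a), Finset.filter_or,
    Finset.card_union_of_disjoint, Finset.filter_eq']
  · split
    · simp
    · simp
  · rw [Finset.disjoint_filter]
    intro a _ ha hb
    rw [Equiv.eq_symm_apply] at hb
    omega

section Aux

variable {n : ℕ} {w : Equiv.Perm ℕ} (hw : ∀ a, a ∉ Finset.Icc 1 n → w a = a)

include hw

lemma symm_fix : ∀ a, a ∉ Finset.Icc 1 n → w.symm a = a := by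
  intro a ha
  conv_lhs => rw [← hw a ha]
  simp

lemma maps_Icc : ∀ a, a ∈ Finset.Icc 1 n → w a ∈ Finset.Icc 1 n := by
  intro a ha
  by_contra h
  have := hw (w a) h
  have : a = w a := w.injective this.symm
  rw [← this] at h
  exact h ha

lemma symm_maps_Icc : ∀ a, a ∈ Finset.Icc 1 n → w.symm a ∈ Finset.Icc 1 n := by
  intro a ha
  by_contra h
  have := symm_fix hw (w.symm a) h
  have : w.symm a = a := by
    have h2 := congrArg w.symm this
    simpa using h2
  rw [this] at h
  exact h ha

lemma rothe_bounds {p q : ℕ} (h : inRothe w p q) : p ≤ n ∧ q ≤ n := by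
  obtain ⟨h1, h2⟩ := h
  have hq : q ∈ Finset.Icc 1 n := by
    by_contra hq
    have := symm_fix hw q hq
    rw [this] at h2
    -- p < q, and q < w p
    by_cases hp : p ∈ Finset.Icc 1 n
    · have := maps_Icc hw p hp
      rw [Finset.mem_Icc] at this hq
      omega
    · have := hw p hp
      rw [this] at h1
      omega
  have hws := symm_maps_Icc hw q hq
  rw [Finset.mem_Icc] at hws hq
  exact ⟨by omega, by omega⟩

/-- Walk southeast from a diagram box to an essential box, preserving rank. -/
lemma walk_to_ess : ∀ m p q, 2*n + 2 ≤ m + p + q → inRothe w p q →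
    ∃ p' q', inEss w p' q' ∧ p ≤ p' ∧ q ≤ q' ∧ rk w p' q' = rk w p q := by
  intro m
  induction m with
  | zero =>
    intro p q hm h
    have := rothe_bounds hw h
    omega
  | succ m ih =>
    intro p q hm h
    by_cases h1 : inRothe w (p+1) q
    · obtain ⟨p', q', hess, hp, hq, hrk⟩ := ih (p+1) q (by omega) h1
      refine ⟨p', q', hess, by omega, hq, ?_⟩
      rw [hrk, rk_succ_row]
      have : ¬ w (p+1) ≤ q := not_le.mpr h1.1
      simp [this]
    · by_cases h2 : inRothe w p (q+1)
      · obtain ⟨p', q', hess, hp, hq, hrk⟩ := ih p (q+1) (by omega) h2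
        refine ⟨p', q', hess, hp, by omega, ?_⟩
        rw [hrk, rk_succ_col]
        have : w.symm (q+1) ∉ Finset.Icc 1 p := by
          rw [Finset.mem_Icc]
          have := h2.2
          omega
        simp [this]
      · exact ⟨p, q, ⟨h, h1, h2⟩, le_rfl, le_rfl, rfl⟩

end Aux

lemma card_inter_Icc_succ (S : Finset ℕ) (a : ℕ) :
    (S ∩ Finset.Icc 1 (a+1)).card ≤ (S ∩ Finset.Icc 1 a).card + 1 := by
  have h : S ∩ Finset.Icc 1 (a+1) ⊆ insert (a+1) (S ∩ Finset.Icc 1 a) := by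
    intro x hx
    rw [Finset.mem_inter, Finset.mem_Icc] at hx
    rw [Finset.mem_insert, Finset.mem_inter, Finset.mem_Icc]
    rcases eq_or_ne x (a+1) with h | h
    · exact Or.inl h
    · exact Or.inr ⟨hx.1, hx.2.1, by omega⟩
  calc (S ∩ Finset.Icc 1 (a+1)).card ≤ (insert (a+1) (S ∩ Finset.Icc 1 a)).card :=
        Finset.card_le_card h
    _ ≤ (S ∩ Finset.Icc 1 a).card + 1 := Finset.card_insert_le _ _

lemma card_inter_Icc_mono (S : Finset ℕ) {a b : ℕ} (h : a ≤ b) :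
    (S ∩ Finset.Icc 1 a).card ≤ (S ∩ Finset.Icc 1 b).card :=
  Finset.card_le_card (Finset.inter_subset_inter le_rfl (Finset.Icc_subset_Icc_right h))

/-- Row descent: find a diagram box in column `j` witnessing the rank deficiency. -/
lemma row_descent (w : Equiv.Perm ℕ) (i j : ℕ) (I : Finset ℕ) (hij : inRothe w i j) :
    ∀ a, a ≤ i → rk w a j < (I ∩ Finset.Icc 1 a).card →
      ∃ p, p ≤ a ∧ inRothe w p j ∧ rk w p j < (I ∩ Finset.Icc 1 p).card := by
  intro a
  induction a with
  | zero =>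
    intro _ h
    have : Finset.Icc 1 0 = ∅ := by simp
    rw [this] at h
    simp at h
  | succ a ih =>
    intro ha h
    by_cases hc : j < w (a+1)
    · exact ⟨a+1, le_rfl, ⟨hc, lt_of_le_of_lt ha hij.2⟩, h⟩
    · push_neg at hc
      have h1 : rk w (a+1) j = rk w a j + 1 := by
        rw [rk_succ_row]; simp [hc]
      have h2 := card_inter_Icc_succ I a
      obtain ⟨p, hp, hr, hlt⟩ := ih (by omega) (by omega)
      exact ⟨p, by omega, hr, hlt⟩

/-- Column descent: find a diagram box in row `i` witnessing the rank deficiency. -/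
lemma col_descent (n : ℕ) (w : Equiv.Perm ℕ) (hw : ∀ a, a ∉ Finset.Icc 1 n → w a = a)
    (i j : ℕ) (J : Finset ℕ) (hij : inRothe w i j) :
    ∀ b, b ≤ j → rk w i b < (J ∩ Finset.Icc 1 b).card →
      ∃ q, q ≤ b ∧ inRothe w i q ∧ rk w i q < (J ∩ Finset.Icc 1 q).card := by
  intro b
  induction b with
  | zero =>
    intro _ h
    have : Finset.Icc 1 0 = ∅ := by simp
    rw [this] at h
    simp at h
  | succ b ih =>
    intro hb h
    by_cases hc : i < w.symm (b+1)
    · exact ⟨b+1, le_rfl, ⟨lt_of_le_of_lt hb hij.1, hc⟩, h⟩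
    · push_neg at hc
      have hpos : 1 ≤ w.symm (b+1) := by
        by_contra hp
        have h0 : w.symm (b+1) = 0 := by omega
        have hwb : w 0 = b + 1 := by
          have := congrArg w h0
          simpa using this.symm
        rw [hw 0 (by simp)] at hwb
        omega
      have h1 : rk w i (b+1) = rk w i b + 1 := by
        rw [rk_succ_col]
        have : w.symm (b+1) ∈ Finset.Icc 1 i := Finset.mem_Icc.mpr ⟨hpos, hc⟩
        simp [this]
      have h2 := card_inter_Icc_succ J b
      obtain ⟨q, hq, hr, hlt⟩ := ih (by omega) (by omega)
      exact ⟨q, by omega, hr, hlt⟩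

/-- Claim 2.1: for an elusive minor m_{I,J} belonging to
(i,j) ∈ E(w) with r = r_{i,j}(w), the k-th smallest row index i_k satisfies
r_{i_k,j} ≥ k, and the k-th smallest column index j_k satisfies r_{i,j_k} ≥ k,
for 1 ≤ k ≤ r. -/
theorem claim_rank_lower_bound (n : ℕ) (w : Equiv.Perm ℕ)
    (hw : ∀ a, a ∉ Finset.Icc 1 n → w a = a)
    (i j r : ℕ) (I J : Finset ℕ)
    (he : inEss w i j) (hr : r = rk w i j)
    (hel : elusive w I J i j) :
    ∀ k, 1 ≤ k → k ≤ r →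
      (∀ a ∈ I, (I ∩ Finset.Icc 1 a).card = k → k ≤ rk w a j) ∧
      (∀ b ∈ J, (J ∩ Finset.Icc 1 b).card = k → k ≤ rk w i b) := by
  intro k hk1 hkr
  obtain ⟨hb, hmin⟩ := hel
  obtain ⟨_, hI, hJ, hIc, hJc⟩ := hb
  constructor
  · intro a haI hcard
    by_contra hlt
    push_neg at hlt
    have ha : a ≤ i := (Finset.mem_Icc.mp (hI haI)).2
    obtain ⟨p, hpa, hpr, hplt⟩ := row_descent w i j I he.1 a ha (by omega)
    obtain ⟨p', q', hess, hpp, hjq, hrk⟩ :=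
      walk_to_ess hw (2*n + 2) p j (by omega) hpr
    have hcard_p : (I ∩ Finset.Icc 1 p).card ≤ k := by
      rw [← hcard]; exact card_inter_Icc_mono I hpa
    have hrank_lt : rk w p' q' < rk w i j := by
      rw [hrk]; omega
    refine hmin p' q' hess hrank_lt (Or.inl ⟨?_, ?_⟩)
    · calc rk w p' q' = rk w p j := hrk
        _ < (I ∩ Finset.Icc 1 p).card := hplt
        _ ≤ (I ∩ Finset.Icc 1 p').card := card_inter_Icc_mono I hpp
    · rw [Finset.inter_eq_left.mpr (hJ.trans (Finset.Icc_subset_Icc_right hjq))]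
  · intro b hbJ hcard
    by_contra hlt
    push_neg at hlt
    have hbj : b ≤ j := (Finset.mem_Icc.mp (hJ hbJ)).2
    obtain ⟨q, hqb, hqr, hqlt⟩ := col_descent n w hw i j J he.1 b hbj (by omega)
    obtain ⟨p', q', hess, hip, hqq, hrk⟩ :=
      walk_to_ess hw (2*n + 2) i q (by omega) hqr
    have hcard_q : (J ∩ Finset.Icc 1 q).card ≤ k := by
      rw [← hcard]; exact card_inter_Icc_mono J hqb
    have hrank_lt : rk w p' q' < rk w i j := by
      rw [hrk]; omega
    refine hmin p' q' hess hrank_lt (Or.inr ⟨?_, ?_⟩)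
    · rw [Finset.inter_eq_left.mpr (hI.trans (Finset.Icc_subset_Icc_right hip))]
    · calc rk w p' q' = rk w i q := hrk
        _ < (J ∩ Finset.Icc 1 q).card := hqlt
        _ ≤ (J ∩ Finset.Icc 1 q').card := card_inter_Icc_mono J hqq
end

section
/- (Shifting lemma) Let w ∈ S_n and suppose m_{I,J} is an elusive minor belonging to (i,j) ∈ E(w). If I' = (I \ {a}) ∪ {t} for some a ∈ I, t > a, t ∉ I with I' ⊆ [i], then m_{I',J} is also elusive (belonging to (i,j)). -/
/-- Shifting lemma: replacing a row index of an elusive minor by a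
larger one (staying within [i]) preserves elusiveness. -/
theorem shifting_lemma (n : ℕ) (w : Equiv.Perm ℕ)
    (hw : ∀ a, a ∉ Finset.Icc 1 n → w a = a)
    (i j : ℕ) (I J I' : Finset ℕ)
    (hel : elusive w I J i j)
    (a t : ℕ) (ha : a ∈ I) (hat : a < t) (ht : t ∉ I)
    (hI' : I' = insert t (I.erase a)) (hsub : I' ⊆ Finset.Icc 1 i) :
    elusive w I' J i j := by
  obtain ⟨⟨hess, hIsub, hJsub, hIcard, hJcard⟩, hmin⟩ := hel
  have htna : t ∉ I.erase a := fun h => ht (Finset.mem_of_mem_erase h)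
  have hI'card : I'.card = I.card := by
    rw [hI', Finset.card_insert_of_notMem htna, Finset.card_erase_of_mem ha]
    have : 0 < I.card := Finset.card_pos.mpr ⟨a, ha⟩
    omega
  have ha1 : 1 ≤ a := (Finset.mem_Icc.mp (hIsub ha)).1
  refine ⟨⟨hess, hsub, hJsub, by rw [hI'card]; exact hIcard, hJcard⟩, ?_⟩
  intro i' j' hess' hrk hatt
  apply hmin i' j' hess' hrk
  rcases hatt with ⟨h1, h2⟩ | ⟨h1, h2⟩
  · left
    refine ⟨lt_of_lt_of_le h1 ?_, h2⟩
    by_cases hts : t ≤ i'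
    · have haS : a ∈ Finset.Icc 1 i' := Finset.mem_Icc.mpr ⟨ha1, by omega⟩
      have htS : t ∈ Finset.Icc 1 i' := Finset.mem_Icc.mpr ⟨by omega, hts⟩
      have heq : I' ∩ Finset.Icc 1 i' = insert t ((I ∩ Finset.Icc 1 i').erase a) := by
        rw [hI']
        ext x
        simp only [Finset.mem_inter, Finset.mem_insert, Finset.mem_erase]
        constructor
        · rintro ⟨rfl | ⟨hxa, hxI⟩, hxS⟩
          · exact Or.inl rfl
          · exact Or.inr ⟨hxa, hxI, hxS⟩
        · rintro (rfl | ⟨hxa, hxI, hxS⟩)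
          · exact ⟨Or.inl rfl, htS⟩
          · exact ⟨Or.inr ⟨hxa, hxI⟩, hxS⟩
      rw [heq, Finset.card_insert_of_notMem
        (fun h => ht (Finset.mem_inter.mp (Finset.mem_of_mem_erase h)).1),
        Finset.card_erase_of_mem (Finset.mem_inter.mpr ⟨ha, haS⟩)]
      have : 0 < (I ∩ Finset.Icc 1 i').card :=
        Finset.card_pos.mpr ⟨a, Finset.mem_inter.mpr ⟨ha, haS⟩⟩
      omega
    · apply Finset.card_le_card
      intro x hx
      rw [hI'] at hx
      obtain ⟨hx1, hx2⟩ := Finset.mem_inter.mp hx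
      have hxi' := (Finset.mem_Icc.mp hx2).2
      rcases Finset.mem_insert.mp hx1 with rfl | hx1
      · omega
      · exact Finset.mem_inter.mpr ⟨Finset.mem_of_mem_erase hx1, hx2⟩
  · right
    refine ⟨?_, h2⟩
    have hsub' : I' ⊆ Finset.Icc 1 i' := by
      have : I' ∩ Finset.Icc 1 i' = I' :=
        Finset.eq_of_subset_of_card_le Finset.inter_subset_left (by omega)
      exact Finset.inter_eq_left.mp this
    have htS : t ∈ Finset.Icc 1 i' := hsub' (by rw [hI']; exact Finset.mem_insert_self _ _)
    have hIsub' : I ⊆ Finset.Icc 1 i' := by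
      intro x hx
      by_cases hxa : x = a
      · subst hxa
        exact Finset.mem_Icc.mpr ⟨ha1, by have := (Finset.mem_Icc.mp htS).2; omega⟩
      · exact hsub' (by rw [hI']; exact Finset.mem_insert_of_mem (Finset.mem_erase.mpr ⟨hxa, hx⟩))
    rw [Finset.inter_eq_left.mpr hIsub']
end

section
/- Let w ∈ S_n and let m = m_{I,J} be an essential minor belonging to (i,j) ∈ E(w) that is not elusive, say attending (i',j') ∈ E(w) with r_{i',j'}(w) < r_{i,j}(w). Then the determinant m_{I,J} lies in the ideal of the polynomial ring k[x_{ab}] generated by the (r_{i',j'}+1) × (r_{i',j'}+1) minors of the generic matrix with rows in [i'] and columns in [j']. -/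
/-- The minor of the generic matrix with row set I and column set J,
as a multivariate polynomial. -/
noncomputable def minorPoly (k : Type*) [CommRing k] (I J : Finset ℕ)
    (h : J.card = I.card) : MvPolynomial (ℕ × ℕ) k :=
  (Matrix.of fun a b : Fin I.card =>
    MvPolynomial.X (I.orderEmbOfFin rfl a, J.orderEmbOfFin h b)).det

open MvPolynomial in
lemma minorPoly_eq (k : Type*) [CommRing k] (I J : Finset ℕ) (h : J.card = I.card)
    (t : ℕ) (ht : I.card = t) :
    minorPoly k I J h = (Matrix.of fun a b : Fin t =>
      MvPolynomial.X (I.orderEmbOfFin ht a, J.orderEmbOfFin (h.trans ht) b)).det := by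
  subst ht; rfl

lemma orderEmbOfFin_erase {s : Finset ℕ} {n : ℕ} (hs : s.card = n + 1) (a : Fin (n + 1))
    (h' : (s.erase (s.orderEmbOfFin hs a)).card = n) (x : Fin n) :
    (s.erase (s.orderEmbOfFin hs a)).orderEmbOfFin h' x
      = s.orderEmbOfFin hs (a.succAbove x) := by
  have hu := Finset.orderEmbOfFin_unique h'
    (f := fun x : Fin n => s.orderEmbOfFin hs (a.succAbove x))
    (fun x => Finset.mem_erase.2
      ⟨(s.orderEmbOfFin hs).injective.ne (Fin.succAbove_ne a x), s.orderEmbOfFin_mem hs _⟩)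
    ((s.orderEmbOfFin hs).strictMono.comp (Fin.strictMono_succAbove a))
  exact (congrFun hu x).symm

open MvPolynomial in
lemma minorPoly_cofactor (k : Type*) [CommRing k] (I J : Finset ℕ) (h : J.card = I.card)
    (n : ℕ) (hn : I.card = n + 1) (a : Fin (n + 1)) :
    minorPoly k I J h = ∑ b : Fin (n + 1),
      (-1) ^ ((a : ℕ) + (b : ℕ)) *
        MvPolynomial.X (I.orderEmbOfFin hn a, J.orderEmbOfFin (h.trans hn) b) *
        minorPoly k (I.erase (I.orderEmbOfFin hn a))
          (J.erase (J.orderEmbOfFin (h.trans hn) b))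
          (by
            rw [Finset.card_erase_of_mem (J.orderEmbOfFin_mem _ _),
              Finset.card_erase_of_mem (I.orderEmbOfFin_mem _ _)]
            omega) := by
  rw [minorPoly_eq k I J h (n + 1) hn, Matrix.det_succ_row _ a]
  refine Finset.sum_congr rfl fun b _ => ?_
  congr 1
  have hI : (I.erase (I.orderEmbOfFin hn a)).card = n := by
    rw [Finset.card_erase_of_mem (I.orderEmbOfFin_mem _ _)]; omega
  have hJ : (J.erase (J.orderEmbOfFin (h.trans hn) b)).card = n := by
    rw [Finset.card_erase_of_mem (J.orderEmbOfFin_mem _ _)]; omega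
  rw [minorPoly_eq k _ _ _ n hI]
  congr 1
  ext p q
  simp only [Matrix.submatrix_apply, Matrix.of_apply]
  rw [orderEmbOfFin_erase hn a hI p, orderEmbOfFin_erase (h.trans hn) b _ q]

open MvPolynomial in
lemma minor_mem_span (k : Type*) [CommRing k] :
    ∀ (m : ℕ) (I J : Finset ℕ) (h : J.card = I.card) (R : Finset ℕ),
      R ⊆ I → I.card = R.card + m →
      minorPoly k I J h ∈ Ideal.span
        {f : MvPolynomial (ℕ × ℕ) k | ∃ (I' J' : Finset ℕ) (h' : J'.card = I'.card),
          I' ⊆ R ∧ J' ⊆ J ∧ I'.card = R.card ∧ f = minorPoly k I' J' h'} := by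
  intro m
  induction m with
  | zero =>
    intro I J h R hRI hcard
    have hIR : I = R := (Finset.eq_of_subset_of_card_le hRI (by omega)).symm
    exact Ideal.subset_span ⟨I, J, h, hIR.le, le_refl J, by omega, rfl⟩
  | succ m ih =>
    intro I J h R hRI hcard
    have hns : ¬ I ⊆ R := fun hs => by
      have := Finset.card_le_card hs; omega
    obtain ⟨r, hrI, hrR⟩ := Finset.not_subset.1 hns
    have hn : I.card = (R.card + m) + 1 := by omega
    obtain ⟨a, ha⟩ : ∃ a : Fin (R.card + m + 1), I.orderEmbOfFin hn a = r := by
      have hmem : r ∈ Set.range (I.orderEmbOfFin hn) := by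
        rw [Finset.range_orderEmbOfFin]; exact_mod_cast hrI
      exact hmem
    rw [minorPoly_cofactor k I J h (R.card + m) hn a]
    refine Ideal.sum_mem _ fun b _ => Ideal.mul_mem_left _ _ ?_
    have hsub : R ⊆ I.erase (I.orderEmbOfFin hn a) := fun x hx =>
      Finset.mem_erase.2 ⟨fun hxr => hrR (by rw [← ha, ← hxr]; exact hx), hRI hx⟩
    have hc2 : (I.erase (I.orderEmbOfFin hn a)).card = R.card + m := by
      rw [Finset.card_erase_of_mem (I.orderEmbOfFin_mem _ _)]; omega
    refine Ideal.span_mono ?_ (ih _ _ _ _ hsub hc2)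
    rintro f ⟨I', J', h', hI', hJ', hcI', rfl⟩
    exact ⟨I', J', h', hI', hJ'.trans (Finset.erase_subset _ _), hcI', rfl⟩

open MvPolynomial in
lemma rename_swap_minorPoly (k : Type*) [CommRing k] (I J : Finset ℕ) (h : J.card = I.card) :
    MvPolynomial.rename (Equiv.prodComm ℕ ℕ) (minorPoly k I J h)
      = minorPoly k J I h.symm := by
  rw [minorPoly_eq k J I h.symm I.card h]
  unfold minorPoly
  rw [show (rename (Equiv.prodComm ℕ ℕ))
      ((Matrix.of fun a b : Fin I.card =>
        (X (I.orderEmbOfFin rfl a, J.orderEmbOfFin h b) : MvPolynomial (ℕ × ℕ) k)).det)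
    = ((Matrix.of fun a b : Fin I.card =>
        (X (I.orderEmbOfFin rfl a, J.orderEmbOfFin h b) : MvPolynomial (ℕ × ℕ) k)).map
          (rename (Equiv.prodComm ℕ ℕ))).det from AlgHom.map_det _ _]
  rw [← Matrix.det_transpose]
  congr 1
  ext a b
  simp [Matrix.map_apply, rename_X, Equiv.prodComm]

/-- a non-elusive essential minor attending (i',j') lies in the ideal
generated by the (r_{i',j'}+1)-size minors of the northwest i' × j' generic submatrix. -/
theorem nonelusive_in_smaller_ideal (k : Type*) [Field k]
    (n : ℕ) (w : Equiv.Perm ℕ) (hw : ∀ a, a ∉ Finset.Icc 1 n → w a = a)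
    (I J : Finset ℕ) (h : J.card = I.card) (i j i' j' : ℕ)
    (hb : belongsTo w I J i j) (he' : inEss w i' j')
    (hr : rk w i' j' < rk w i j) (ha : attends w I J i' j') :
    minorPoly k I J h ∈ Ideal.span
      {f : MvPolynomial (ℕ × ℕ) k | ∃ (I' J' : Finset ℕ) (h' : J'.card = I'.card),
        I' ⊆ Finset.Icc 1 i' ∧ J' ⊆ Finset.Icc 1 j' ∧
        I'.card = rk w i' j' + 1 ∧ f = minorPoly k I' J' h'} := by
  obtain ⟨-, -, -, hIc, hJc⟩ := hb
  set s := rk w i' j' with hs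
  rcases ha with ⟨hlt, hJ⟩ | ⟨hI, hlt⟩
  · -- more than s rows within [i'], all columns within [j']
    have hJsub : J ⊆ Finset.Icc 1 j' := by
      have : J = J ∩ Finset.Icc 1 j' :=
        (Finset.eq_of_subset_of_card_le Finset.inter_subset_left hJ.ge).symm
      rw [this]; exact Finset.inter_subset_right
    obtain ⟨R, hRsub, hRcard⟩ :=
      Finset.exists_subset_card_eq (s := I ∩ Finset.Icc 1 i') (n := s + 1) hlt
    have hRI : R ⊆ I := hRsub.trans Finset.inter_subset_left
    have hle : s + 1 ≤ I.card := by
      have := Finset.card_le_card hRI; omega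
    have hm : I.card = R.card + (I.card - (s + 1)) := by omega
    refine Ideal.span_mono ?_ (minor_mem_span k (I.card - (s + 1)) I J h R hRI hm)
    rintro f ⟨I', J', h', hI', hJ', hcI', rfl⟩
    exact ⟨I', J', h', hI'.trans (hRsub.trans Finset.inter_subset_right),
      hJ'.trans hJsub, by omega, rfl⟩
  · -- all rows within [i'], more than s columns within [j']
    have hIsub : I ⊆ Finset.Icc 1 i' := by
      have : I = I ∩ Finset.Icc 1 i' :=
        (Finset.eq_of_subset_of_card_le Finset.inter_subset_left hI.ge).symm
      rw [this]; exact Finset.inter_subset_right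
    obtain ⟨R, hRsub, hRcard⟩ :=
      Finset.exists_subset_card_eq (s := J ∩ Finset.Icc 1 j') (n := s + 1) hlt
    have hRJ : R ⊆ J := hRsub.trans Finset.inter_subset_left
    have hle : s + 1 ≤ J.card := by
      have := Finset.card_le_card hRJ; omega
    have hm : J.card = R.card + (J.card - (s + 1)) := by omega
    have hmem := minor_mem_span k (J.card - (s + 1)) J I h.symm R hRJ hm
    have hswap : minorPoly k I J h
        = MvPolynomial.rename (Equiv.prodComm ℕ ℕ) (minorPoly k J I h.symm) := by
      rw [rename_swap_minorPoly]
    rw [hswap]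
    have hmap := Ideal.mem_map_of_mem (MvPolynomial.rename (Equiv.prodComm ℕ ℕ)) hmem
    rw [Ideal.map_span] at hmap
    refine Ideal.span_mono ?_ hmap
    rintro f ⟨g, ⟨I', J', h', hI', hJ', hcI', rfl⟩, rfl⟩
    refine ⟨J', I', h'.symm, hJ'.trans hIsub,
      hI'.trans (hRsub.trans Finset.inter_subset_right), by omega,
      (rename_swap_minorPoly k I' J' h').symm ▸ rfl⟩
end

section
/- Let w ∈ S_n be vexillary (i.e., 2143-avoiding). Then no box of the essential set E(w) is strictly northwest of another: there do not exist (i,j), (i',j') ∈ E(w) with i < i' and j < j'. -/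
def contains1342 (w : Equiv.Perm ℕ) : Prop :=
  ∃ a1 a2 a3 a4 : ℕ, a1 < a2 ∧ a2 < a3 ∧ a3 < a4 ∧
    w a1 < w a4 ∧ w a4 < w a2 ∧ w a2 < w a3

def contains1432 (w : Equiv.Perm ℕ) : Prop :=
  ∃ a1 a2 a3 a4 : ℕ, a1 < a2 ∧ a2 < a3 ∧ a3 < a4 ∧
    w a1 < w a4 ∧ w a4 < w a3 ∧ w a3 < w a2

def contains1423 (w : Equiv.Perm ℕ) : Prop :=
  ∃ a1 a2 a3 a4 : ℕ, a1 < a2 ∧ a2 < a3 ∧ a3 < a4 ∧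
    w a1 < w a3 ∧ w a3 < w a4 ∧ w a4 < w a2

def contains2143 (w : Equiv.Perm ℕ) : Prop :=
  ∃ a1 a2 a3 a4 : ℕ, a1 < a2 ∧ a2 < a3 ∧ a3 < a4 ∧
    w a2 < w a1 ∧ w a1 < w a4 ∧ w a4 < w a3

/-- for a vexillary (2143-avoiding) permutation, no essential box
is strictly northwest of another. -/
theorem vexillary_essential_not_nw (n : ℕ) (w : Equiv.Perm ℕ)
    (hw : ∀ a, a ∉ Finset.Icc 1 n → w a = a)
    (hvex : ¬ contains2143 w) :
    ¬ ∃ i j i' j' : ℕ, inEss w i j ∧ inEss w i' j' ∧ i < i' ∧ j < j' := by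
  rintro ⟨i, j, i', j', ⟨⟨hji, hij⟩, hR1, hR2⟩, ⟨⟨hj'i', hi'j'⟩, -, -⟩, hii', hjj'⟩
  apply hvex
  set d := w.symm j' with hd_def
  have hwd : w d = j' := w.apply_symm_apply j'
  have hdd : i' < d := hi'j'
  -- w (i+1) ≤ j
  have h1 : w (i+1) ≤ j := by
    by_contra h
    push_neg at h
    have h2 : w.symm j ≤ i + 1 := by
      by_contra h3
      exact hR1 ⟨h, by omega⟩
    have h4 : w.symm j = i + 1 := by omega
    have : w (i+1) = j := by rw [← h4, Equiv.apply_symm_apply]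
    omega
  have hi1 : i + 1 < i' := by
    rcases eq_or_lt_of_le (by omega : i + 1 ≤ i') with h | h
    · exfalso; rw [← h] at hj'i'; omega
    · exact h
  have hwi_ne : w i ≠ j' := by
    intro h
    have : i = d := by rw [hd_def, ← h, Equiv.symm_apply_apply]
    omega
  rcases lt_or_gt_of_ne hwi_ne with hlt | hgt
  · exact ⟨i, i+1, i', d, by omega, hi1, hdd, by omega, by omega, by omega⟩
  · -- w i > j', use p = w.symm (j+1)
    have hwij : j + 1 < w i := by omega
    have hp : w.symm (j+1) ≤ i := by
      by_contra h3
      exact hR2 ⟨hwij, by omega⟩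
    have hwp : w (w.symm (j+1)) = j + 1 := w.apply_symm_apply _
    have hpne : w.symm (j+1) ≠ i := by
      intro h
      rw [h] at hwp; omega
    have hjj1 : j + 1 < j' := by
      rcases eq_or_lt_of_le (by omega : j + 1 ≤ j') with h | h
      · exfalso
        have : w.symm (j+1) = d := by rw [hd_def, h]
        omega
      · exact h
    exact ⟨w.symm (j+1), i+1, i', d, by omega, hi1, hdd, by omega, by omega, by omega⟩
end

section
/- Let w ∈ S_n and suppose (i,j) ∈ D(w), r = r_{i,j}(w), and there exist indices a_1 < a_2 with a_2 < i, w(a_1) < j < w(a_2), and i - r - 1 ≥ a_1. If additionally w(i-r-1) < j, then there exists a with i-r-1 < a < i and (a,j) ∈ D(w); consequently w contains the pattern 1342 or 1432 via the indices i-r-1 < a < i < w⁻¹(j). -/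
/-- in the setting of the proof of Corollary 1.8, if w(i-r-1) < j
then some (a,j) ∈ D(w) with i-r-1 < a < i, and consequently w contains 1342 or 1432. -/
theorem pigeonhole_pattern_step (n : ℕ) (w : Equiv.Perm ℕ)
    (hw : ∀ a, a ∉ Finset.Icc 1 n → w a = a)
    (i j r : ℕ) (hb : inRothe w i j) (hr : r = rk w i j)
    (a₁ a₂ : ℕ) (h12 : a₁ < a₂) (h2i : a₂ < i)
    (hv1 : w a₁ < j) (hv2 : j < w a₂)
    (ha1 : a₁ ≤ i - (r + 1))
    (hlow : w (i - (r + 1)) < j) :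
    (∃ a : ℕ, i - (r + 1) < a ∧ a < i ∧ inRothe w a j) ∧
    (contains1342 w ∨ contains1432 w) := by
  obtain ⟨hji, hiw⟩ := hb
  have key : ∃ a : ℕ, i - (r + 1) < a ∧ a < i ∧ inRothe w a j := by
    by_cases hc : i - (r + 1) < a₂
    · exact ⟨a₂, hc, h2i, hv2, lt_trans h2i hiw⟩
    · push_neg at hc
      by_contra hno
      push_neg at hno
      have hge1 : 1 ≤ i - (r + 1) := by omega
      have hsub : Finset.Icc (i - (r+1)) (i-1) ⊆
          (Finset.Icc 1 i).filter (fun a => w a ≤ j) := by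
        intro a ha
        simp only [Finset.mem_Icc, Finset.mem_filter] at *
        refine ⟨⟨by omega, by omega⟩, ?_⟩
        rcases Nat.eq_or_lt_of_le ha.1 with h | h
        · rw [← h]; exact le_of_lt hlow
        · have := hno a h (by omega)
          unfold inRothe at this
          push_neg at this
          by_contra hwa
          exact absurd (this (by omega)) (by omega)
      have hcard := Finset.card_le_card hsub
      rw [Nat.card_Icc] at hcard
      rw [show ((Finset.Icc 1 i).filter (fun a => w a ≤ j)).card = rk w i j from rfl,
        ← hr] at hcard
      omega
  obtain ⟨a, hA1, hA2, hja, haw⟩ := key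
  refine ⟨⟨a, hA1, hA2, hja, haw⟩, ?_⟩
  have hwb4 : w (w.symm j) = j := w.apply_symm_apply j
  have hne : w a ≠ w i := fun h => absurd (w.injective h) (by omega)
  rcases lt_or_gt_of_ne hne with h | h
  · left
    exact ⟨i - (r+1), a, i, w.symm j, hA1, hA2, hiw,
      by rw [hwb4]; exact hlow, by rw [hwb4]; exact hja, h⟩
  · right
    exact ⟨i - (r+1), a, i, w.symm j, hA1, hA2, hiw,
      by rw [hwb4]; exact hlow, by rw [hwb4]; exact hji, h⟩
end
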